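/- (Theorem 3.2, trajectory form.) Let n, m, l be positive integers, ε_{f0}, ε_f, ε_g ≥ 0, and P a symmetric positive definite real (n+m)×(n+m) matrix; set Sₓ := R₂ᵀPR₁, S_u := R₂ᵀPR₂. For each i ∈ {0, 1, …, l} let Āᵢ, ΔĀᵢ be real n×(n+m) matrices, K̄ᵢ real m×(n+m) matrices, C̄ᵢ ∈ ℝⁿ⁺ᵐ and ΔCᵢ ∈ ℝⁿ, with C̄₀ = 0, ΔC₀ = 0, ‖ΔĀ₀‖ ≤ ε_{f0}, and ‖ΔĀᵢ‖ ≤ ε_f, ‖ΔCᵢ‖ ≤ ε_g for i ∈ {1, …, l}; for each i ∈ {1, …, l} let Qᵢ be a real kᵢ×(n+m) matrix and fᵢ ∈ ℝ^{kᵢ}. Suppose there exist η₀ > 0 and ηᵢ₁, ηᵢ₂, ηᵢ₃ > 0 (i ∈ {1,…,l}) such that the LMI (25) of region 0 and the LMIs (24) of regions 1,…,l (with Λᵢ := P(R₁Āᵢ + R₂K̄ᵢ) + (R₁Āᵢ + R₂K̄ᵢ)ᵀP) are negative definite. Let x̄ : ℝ → ℝⁿ⁺ᵐ be differentiable and ι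 : ℝ → {0, 1, …, l} be such that for every t ≥ 0: x̄′(t) = (R₁Ā_{ι(t)} + R₂K̄_{ι(t)} + (R₁ − R₂S_u⁻¹Sₓ)ΔĀ_{ι(t)}) x̄(t) + C̄_{ι(t)} + (R₁ − R₂S_u⁻¹Sₓ)ΔC_{ι(t)}, and ι(t) ≠ 0 implies ‖Q_{ι(t)} x̄(t) + f_{ι(t)}‖ ≤ 1. Then for every t ≥ 0 with x̄(t) ≠ 0, the function t′ ↦ x̄(t′)ᵀPx̄(t′) is differentiable at t and its derivative at t is strictly negative. -/

import Mathlib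

open Matrix

/-- The block matrix `R₁ = [Iₙ; 0] : ℝ^{(n+m)×n}`. -/
def R1 (n m : ℕ) : Matrix (Fin n ⊕ Fin m) (Fin n) ℝ :=
  Matrix.of fun i j => if i = Sum.inl j then 1 else 0

/-- The block matrix `R₂ = [0; Iₘ] : ℝ^{(n+m)×m}`. -/
def R2 (n m : ℕ) : Matrix (Fin n ⊕ Fin m) (Fin m) ℝ :=
  Matrix.of fun i j => if i = Sum.inr j then 1 else 0

/-- Matrix–vector multiplication viewed as a map between Euclidean spaces
(so that `‖·‖` is the Euclidean norm). -/
def Matrix.mulVecE {ι κ : Type*} [Fintype κ] (M : Matrix ι κ ℝ)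
    (x : EuclideanSpace ℝ κ) : EuclideanSpace ℝ ι :=
  WithLp.toLp 2 (M.mulVec x)

lemma dot_tmul {α β : Type*} [Fintype α] [Fintype β] (A : Matrix β α ℝ) (u : α → ℝ) (w : β → ℝ) :
    u ⬝ᵥ Aᵀ *ᵥ w = (A *ᵥ u) ⬝ᵥ w := by
  rw [Matrix.dotProduct_mulVec, Matrix.vecMul_transpose]

lemma dot_conj {α β γ : Type*} [Fintype α] [Fintype β] [Fintype γ]
    (A : Matrix γ α ℝ) (B : Matrix γ β ℝ) (P : Matrix γ γ ℝ) (u : α → ℝ) (w : β → ℝ) :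
    (A *ᵥ u) ⬝ᵥ P *ᵥ (B *ᵥ w) = u ⬝ᵥ (Aᵀ * P * B) *ᵥ w := by
  rw [← dot_tmul A u, Matrix.mulVec_mulVec, Matrix.mulVec_mulVec, Matrix.mul_assoc]

lemma dot_symm {ι : Type*} [Fintype ι] (P : Matrix ι ι ℝ) (hPt : Pᵀ = P) (u w : ι → ℝ) :
    u ⬝ᵥ P *ᵥ w = w ⬝ᵥ P *ᵥ u := by
  conv_lhs => rw [← hPt]
  rw [dot_tmul, dotProduct_comm]

lemma dotProduct_self_eq_norm_sq {ι : Type*} [Fintype ι] (z : EuclideanSpace ℝ ι) :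
    z ⬝ᵥ z = ‖z‖ ^ 2 := by
  rw [EuclideanSpace.norm_eq, Real.sq_sqrt (Finset.sum_nonneg fun i _ => sq_nonneg _)]
  simp [dotProduct, Real.norm_eq_abs, sq_abs, sq]

/-- Identity coercion from Euclidean space to plain functions. -/
def toPi {ι : Type*} (x : EuclideanSpace ℝ ι) : ι → ℝ := x

lemma R2_mulVec {n m : ℕ} (z : Fin m → ℝ) : (R2 n m) *ᵥ z = Sum.elim (fun _ => 0) z := by
  ext i
  cases i with
  | inl a => simp [R2, Matrix.mulVec, dotProduct]
  | inr b => simp [R2, Matrix.mulVec, dotProduct, Sum.inr.injEq, ite_mul]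

lemma hasDerivAt_quadForm {ι : Type*} [Fintype ι] (P : Matrix ι ι ℝ) (hPt : Pᵀ = P)
    (xbar : ℝ → EuclideanSpace ℝ ι) (v : EuclideanSpace ℝ ι) (t : ℝ)
    (hx : HasDerivAt xbar v t) :
    HasDerivAt (fun t' => xbar t' ⬝ᵥ P *ᵥ xbar t') (2 * (xbar t ⬝ᵥ P *ᵥ v)) t := by
  have hcoord : ∀ j, HasDerivAt (fun t' => xbar t' j) (v j) t := fun j =>
    (EuclideanSpace.proj (𝕜 := ℝ) j).hasFDerivAt.comp_hasDerivAt t hx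
  have h1 : HasDerivAt (fun t' => ∑ a, ∑ b, (xbar t' a) * (P a b * xbar t' b))
      (∑ a, ∑ b, (v a * (P a b * xbar t b) + xbar t a * (P a b * v b))) t :=
    HasDerivAt.fun_sum fun a _ => HasDerivAt.fun_sum fun b _ =>
      (hcoord a).mul ((hcoord b).const_mul _)
  have hfun : (fun t' => xbar t' ⬝ᵥ P *ᵥ xbar t')
      = (fun t' => ∑ a, ∑ b, (xbar t' a) * (P a b * xbar t' b)) := by
    funext t'
    simp [dotProduct, Matrix.mulVec, Finset.mul_sum]
  rw [hfun]
  convert h1 using 1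
  have hsym : v ⬝ᵥ P *ᵥ xbar t = xbar t ⬝ᵥ P *ᵥ v := dot_symm P hPt _ _
  have e1 : (v : ι → ℝ) ⬝ᵥ P *ᵥ xbar t = ∑ a, ∑ b, v a * (P a b * xbar t b) := by
    simp [dotProduct, Matrix.mulVec, Finset.mul_sum]
  have e2 : (xbar t : ι → ℝ) ⬝ᵥ P *ᵥ v = ∑ a, ∑ b, xbar t a * (P a b * v b) := by
    simp [dotProduct, Matrix.mulVec, Finset.mul_sum]
  calc 2 * (xbar t ⬝ᵥ P *ᵥ v) = v ⬝ᵥ P *ᵥ xbar t + xbar t ⬝ᵥ P *ᵥ v := by rw [hsym]; ring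
    _ = ∑ a, ∑ b, (v a * (P a b * xbar t b) + xbar t a * (P a b * v b)) := by
        rw [e1, e2, ← Finset.sum_add_distrib]
        congr 1; funext a; rw [← Finset.sum_add_distrib]

/-- Theorem 3.2 of the paper, trajectory form.  Under the LMIs (25)
(region 0) and (24) (regions 1,…,l) — negative definiteness of a symmetric block matrix
being expressed, as in the paper, via its quadratic form `zᵀMz < 0` for `z ≠ 0` — and
the induced-ℓ²-norm uncertainty bounds `‖ΔĀ₀‖ ≤ ε_{f0}`, `‖ΔĀᵢ‖ ≤ ε_f`, `‖ΔCᵢ‖ ≤ ε_g`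
(a matrix bound `‖M‖ ≤ ε` in the induced ℓ² operator norm being expressed as
`‖Mz‖ ≤ ε‖z‖` for all `z`, with Euclidean vector norms), every trajectory of the
sliding motion `x̄′ = (R₁Ā_ι + R₂K̄_ι + (R₁ − R₂S_u⁻¹Sₓ)ΔĀ_ι)x̄ + C̄_ι +
(R₁ − R₂S_u⁻¹Sₓ)ΔC_ι` staying in the active regions makes `V(x̄) = x̄ᵀPx̄`
differentiable with strictly negative derivative whenever `x̄(t) ≠ 0`. -/
theorem theorem_3_2_sliding_motion_lyapunov_decrease
    (n m l : ℕ) (hn : 0 < n) (hm : 0 < m) (hl : 0 < l)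
    (εf0 εf εg : ℝ) (hεf0 : 0 ≤ εf0) (hεf : 0 ≤ εf) (hεg : 0 ≤ εg)
    (P : Matrix (Fin n ⊕ Fin m) (Fin n ⊕ Fin m) ℝ) (hP : P.PosDef)
    (Sx : Matrix (Fin m) (Fin n) ℝ) (hSx : Sx = (R2 n m)ᵀ * P * R1 n m)
    (Su : Matrix (Fin m) (Fin m) ℝ) (hSu : Su = (R2 n m)ᵀ * P * R2 n m)
    (Abar ΔA : Fin (l + 1) → Matrix (Fin n) (Fin n ⊕ Fin m) ℝ)
    (Kbar : Fin (l + 1) → Matrix (Fin m) (Fin n ⊕ Fin m) ℝ)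
    (Cbar : Fin (l + 1) → EuclideanSpace ℝ (Fin n ⊕ Fin m))
    (ΔC : Fin (l + 1) → EuclideanSpace ℝ (Fin n))
    (hCbar0 : Cbar 0 = 0) (hΔC0 : ΔC 0 = 0)
    (hΔA0 : ∀ z : EuclideanSpace ℝ (Fin n ⊕ Fin m), ‖(ΔA 0).mulVecE z‖ ≤ εf0 * ‖z‖)
    (hΔAi : ∀ i : Fin (l + 1), i ≠ 0 →
      ∀ z : EuclideanSpace ℝ (Fin n ⊕ Fin m), ‖(ΔA i).mulVecE z‖ ≤ εf * ‖z‖)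
    (hΔCi : ∀ i : Fin (l + 1), i ≠ 0 → ‖ΔC i‖ ≤ εg)
    (k : Fin (l + 1) → ℕ)
    (Q : ∀ i : Fin (l + 1), Matrix (Fin (k i)) (Fin n ⊕ Fin m) ℝ)
    (f : ∀ i : Fin (l + 1), EuclideanSpace ℝ (Fin (k i)))
    (η₀ : ℝ) (hη₀ : 0 < η₀)
    (η₁ η₂ η₃ : Fin (l + 1) → ℝ)
    (hη : ∀ i : Fin (l + 1), i ≠ 0 → 0 < η₁ i ∧ 0 < η₂ i ∧ 0 < η₃ i)
    (Λ : Fin (l + 1) → Matrix (Fin n ⊕ Fin m) (Fin n ⊕ Fin m) ℝ)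
    (hΛ : ∀ i, Λ i = P * (R1 n m * Abar i + R2 n m * Kbar i)
      + (R1 n m * Abar i + R2 n m * Kbar i)ᵀ * P)
    (hLMI0 : ∀ (z₀ : Fin n ⊕ Fin m → ℝ) (z₁ : Fin n → ℝ) (z₂ : Fin m → ℝ),
      ¬(z₀ = 0 ∧ z₁ = 0 ∧ z₂ = 0) →
      z₀ ⬝ᵥ (Λ 0 + (η₀ * εf0 ^ 2) • (1 : Matrix (Fin n ⊕ Fin m) (Fin n ⊕ Fin m) ℝ)).mulVec z₀
        + 2 * (z₀ ⬝ᵥ (P * R1 n m).mulVec z₁)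
        + 2 * (z₀ ⬝ᵥ (P * R2 n m).mulVec z₂)
        + z₁ ⬝ᵥ ((R1 n m)ᵀ * P * R1 n m - η₀ • (1 : Matrix (Fin n) (Fin n) ℝ)).mulVec z₁
        - z₂ ⬝ᵥ ((R2 n m)ᵀ * P * R2 n m).mulVec z₂ < 0)
    (hLMIi : ∀ i : Fin (l + 1), i ≠ 0 →
      ∀ (z₀ : Fin n ⊕ Fin m → ℝ) (z₁ z₂ : Fin n → ℝ) (z₃ : ℝ) (z₄ : Fin m → ℝ),
      ¬(z₀ = 0 ∧ z₁ = 0 ∧ z₂ = 0 ∧ z₃ = 0 ∧ z₄ = 0) →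
      z₀ ⬝ᵥ (Λ i + (η₁ i * εf ^ 2) • (1 : Matrix (Fin n ⊕ Fin m) (Fin n ⊕ Fin m) ℝ)
            - η₃ i • ((Q i)ᵀ * Q i)).mulVec z₀
        + 2 * (z₀ ⬝ᵥ (P * R1 n m).mulVec z₁)
        + 2 * (z₀ ⬝ᵥ (P * R1 n m).mulVec z₂)
        + 2 * z₃ * (z₀ ⬝ᵥ (P.mulVec (Cbar i) - η₃ i • (Q i)ᵀ.mulVec (f i)))
        + 2 * (z₀ ⬝ᵥ (P * R2 n m).mulVec z₄)
        + z₁ ⬝ᵥ ((R1 n m)ᵀ * P * R1 n m - η₁ i • (1 : Matrix (Fin n) (Fin n) ℝ)).mulVec z₁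
        + z₂ ⬝ᵥ ((R1 n m)ᵀ * P * R1 n m - η₂ i • (1 : Matrix (Fin n) (Fin n) ℝ)).mulVec z₂
        + (η₂ i * εg ^ 2 - η₃ i * (f i ⬝ᵥ f i - 1)) * z₃ ^ 2
        - (1 / 2) * (z₄ ⬝ᵥ ((R2 n m)ᵀ * P * R2 n m).mulVec z₄) < 0)
    (xbar : ℝ → EuclideanSpace ℝ (Fin n ⊕ Fin m)) (ι : ℝ → Fin (l + 1))
    (hdiff : Differentiable ℝ xbar)
    (hode : ∀ t ≥ (0 : ℝ), HasDerivAt xbar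
      ((R1 n m * Abar (ι t) + R2 n m * Kbar (ι t)
          + (R1 n m - R2 n m * Su⁻¹ * Sx) * ΔA (ι t)).mulVecE (xbar t)
        + Cbar (ι t)
        + (R1 n m - R2 n m * Su⁻¹ * Sx).mulVecE (ΔC (ι t))) t)
    (hreg : ∀ t ≥ (0 : ℝ), ι t ≠ 0 →
      ‖(Q (ι t)).mulVecE (xbar t) + f (ι t)‖ ≤ 1) :
    ∀ t ≥ (0 : ℝ), xbar t ≠ 0 →
      ∃ dV : ℝ, HasDerivAt (fun t' => xbar t' ⬝ᵥ P.mulVec (xbar t')) dV t ∧ dV < 0 := by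
  -- basic symmetry facts about P
  have hPt : Pᵀ = P := by
    ext a b
    have h := congrFun (congrFun hP.1 a) b
    simpa [Matrix.conjTranspose_apply] using h
  have hPq : ∀ y : (Fin n ⊕ Fin m) → ℝ, 0 ≤ y ⬝ᵥ P *ᵥ y := fun y => by
    simpa using hP.posSemidef.dotProduct_mulVec_nonneg y
  have hPqpos : ∀ y : (Fin n ⊕ Fin m) → ℝ, y ≠ 0 → 0 < y ⬝ᵥ P *ᵥ y := fun y hy => by
    simpa using hP.dotProduct_mulVec_pos hy
  -- Su is positive definite, hence invertible
  have hR2ne : ∀ z : Fin m → ℝ, z ≠ 0 → (R2 n m) *ᵥ z ≠ 0 := by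
    intro z hz h0
    apply hz
    rw [R2_mulVec] at h0
    funext b
    exact congrFun h0 (Sum.inr b)
  have hquadSu : ∀ z : Fin m → ℝ, z ⬝ᵥ Su *ᵥ z = (R2 n m *ᵥ z) ⬝ᵥ P *ᵥ (R2 n m *ᵥ z) := by
    intro z
    rw [dot_conj, hSu]
  have hSuH : Su.IsHermitian := by
    have h1 : Suᴴ = Suᵀ := by ext a b; simp [Matrix.conjTranspose_apply]
    rw [Matrix.IsHermitian, h1, hSu]
    simp [Matrix.transpose_mul, Matrix.transpose_transpose, hPt, Matrix.mul_assoc]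
  have hSuPD : Su.PosDef := by
    refine .of_dotProduct_mulVec_pos hSuH (fun z hz => ?_)
    simpa [hquadSu z] using hPqpos _ (hR2ne z hz)
  have hSuInv : Su * Su⁻¹ = 1 :=
    Matrix.mul_nonsing_inv _ (isUnit_iff_ne_zero.mpr hSuPD.det_pos.ne')
  have hcancel : ∀ y : Fin n → ℝ, Su *ᵥ ((Su⁻¹ * Sx) *ᵥ y) = Sx *ᵥ y := by
    intro y
    rw [Matrix.mulVec_mulVec, ← Matrix.mul_assoc, hSuInv, Matrix.one_mul]
  have hSxT : (R1 n m)ᵀ * P * (R2 n m) = Sxᵀ := by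
    rw [hSx]
    simp [Matrix.transpose_mul, Matrix.transpose_transpose, hPt, Matrix.mul_assoc]
  have hcross : ∀ (w : Fin n → ℝ) (zz : Fin m → ℝ),
      (R1 n m *ᵥ w) ⬝ᵥ P *ᵥ (R2 n m *ᵥ zz) = (Sx *ᵥ w) ⬝ᵥ zz := by
    intro w zz
    rw [dot_conj, hSxT, dot_tmul]
  -- the Schur complement inequality
  have hschur : ∀ w : Fin n → ℝ,
      ((Su⁻¹ * Sx) *ᵥ w) ⬝ᵥ Su *ᵥ ((Su⁻¹ * Sx) *ᵥ w)
        ≤ (R1 n m *ᵥ w) ⬝ᵥ P *ᵥ (R1 n m *ᵥ w) := by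
    intro w
    have h0 : 0 ≤ (R1 n m *ᵥ w - R2 n m *ᵥ ((Su⁻¹ * Sx) *ᵥ w)) ⬝ᵥ
        P *ᵥ (R1 n m *ᵥ w - R2 n m *ᵥ ((Su⁻¹ * Sx) *ᵥ w)) := hPq _
    have hc : (R1 n m *ᵥ w) ⬝ᵥ P *ᵥ (R2 n m *ᵥ ((Su⁻¹ * Sx) *ᵥ w))
        = ((Su⁻¹ * Sx) *ᵥ w) ⬝ᵥ Su *ᵥ ((Su⁻¹ * Sx) *ᵥ w) := by
      rw [hcross, ← hcancel w, dotProduct_comm]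
    have hc2 : (R2 n m *ᵥ ((Su⁻¹ * Sx) *ᵥ w)) ⬝ᵥ P *ᵥ (R1 n m *ᵥ w)
        = ((Su⁻¹ * Sx) *ᵥ w) ⬝ᵥ Su *ᵥ ((Su⁻¹ * Sx) *ᵥ w) := by
      rw [dot_symm P hPt, hc]
    have hb := hquadSu ((Su⁻¹ * Sx) *ᵥ w)
    simp only [Matrix.mulVec_sub, dotProduct_sub, sub_dotProduct] at h0
    linarith
  have hW : ∀ w w' : Fin n → ℝ,
      (R1 n m *ᵥ w) ⬝ᵥ P *ᵥ (R1 n m *ᵥ w') = w ⬝ᵥ ((R1 n m)ᵀ * P * R1 n m) *ᵥ w' :=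
    fun w w' => dot_conj _ _ _ _ _
  intro t ht hxne
  have hode' := hode t ht
  refine ⟨_, hasDerivAt_quadForm P hPt xbar _ t hode', ?_⟩
  have hxne' : (xbar t : (Fin n ⊕ Fin m) → ℝ) ≠ 0 := fun h => hxne (by simpa using h)
  -- convert the velocity to plain `Pi` operations
  simp only [WithLp.ofLp_add, Matrix.mulVecE, WithLp.ofLp_toLp]
  show 2 * ((xbar t : (Fin n ⊕ Fin m) → ℝ) ⬝ᵥ P *ᵥ
      ((R1 n m * Abar (ι t) + R2 n m * Kbar (ι t)
          + (R1 n m - R2 n m * Su⁻¹ * Sx) * ΔA (ι t)) *ᵥ (xbar t)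
        + toPi (Cbar (ι t))
        + (R1 n m - R2 n m * Su⁻¹ * Sx) *ᵥ toPi (ΔC (ι t)))) < 0
  -- halving identity for Λ
  have hΛhalf : (xbar t : (Fin n ⊕ Fin m) → ℝ) ⬝ᵥ (Λ (ι t)) *ᵥ xbar t
      = 2 * ((xbar t : (Fin n ⊕ Fin m) → ℝ) ⬝ᵥ P *ᵥ
          ((R1 n m * Abar (ι t) + R2 n m * Kbar (ι t)) *ᵥ xbar t)) := by
    rw [hΛ (ι t), Matrix.add_mulVec, dotProduct_add]
    have hfst : (xbar t : (Fin n ⊕ Fin m) → ℝ) ⬝ᵥ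
        (P * (R1 n m * Abar (ι t) + R2 n m * Kbar (ι t))) *ᵥ xbar t
        = (xbar t : (Fin n ⊕ Fin m) → ℝ) ⬝ᵥ P *ᵥ
          ((R1 n m * Abar (ι t) + R2 n m * Kbar (ι t)) *ᵥ xbar t) := by
      rw [← Matrix.mulVec_mulVec]
    have hsnd : (xbar t : (Fin n ⊕ Fin m) → ℝ) ⬝ᵥ
        ((R1 n m * Abar (ι t) + R2 n m * Kbar (ι t))ᵀ * P) *ᵥ xbar t
        = (xbar t : (Fin n ⊕ Fin m) → ℝ) ⬝ᵥ P *ᵥ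
          ((R1 n m * Abar (ι t) + R2 n m * Kbar (ι t)) *ᵥ xbar t) := by
      rw [← Matrix.mulVec_mulVec, dot_tmul, dot_symm P hPt]
    rw [hfst, hsnd]; ring
  by_cases hj : ι t = 0
  · -- region 0
    have h1 : toPi (Cbar (ι t)) = 0 := by simp [toPi, hj, hCbar0]
    have h2 : toPi (ΔC (ι t)) = 0 := by simp [toPi, hj, hΔC0]
    rw [h1, h2]
    -- instantiate the LMI of region 0
    have lmi := hLMI0 (xbar t) (ΔA (ι t) *ᵥ xbar t)
      (-((Su⁻¹ * Sx) *ᵥ (ΔA (ι t) *ᵥ xbar t))) (fun h => hxne' h.1)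
    rw [← hj] at lmi
    -- norm bound on ΔA 0
    have nw₁ : (ΔA (ι t) *ᵥ (xbar t : (Fin n ⊕ Fin m) → ℝ)) ⬝ᵥ (ΔA (ι t) *ᵥ xbar t)
        ≤ εf0 ^ 2 * ((xbar t : (Fin n ⊕ Fin m) → ℝ) ⬝ᵥ xbar t) := by
      have h := hΔA0 (xbar t)
      rw [← hj] at h
      have h2 := pow_le_pow_left₀ (norm_nonneg _) h 2
      calc (ΔA (ι t) *ᵥ (xbar t : (Fin n ⊕ Fin m) → ℝ)) ⬝ᵥ (ΔA (ι t) *ᵥ xbar t)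
          = ‖(ΔA (ι t)).mulVecE (xbar t)‖ ^ 2 := dotProduct_self_eq_norm_sq ((ΔA (ι t)).mulVecE (xbar t))
        _ ≤ (εf0 * ‖xbar t‖) ^ 2 := h2
        _ = εf0 ^ 2 * ((xbar t : (Fin n ⊕ Fin m) → ℝ) ⬝ᵥ xbar t) := by
            rw [mul_pow, dotProduct_self_eq_norm_sq]
    have nS := hschur (ΔA (ι t) *ᵥ (xbar t : (Fin n ⊕ Fin m) → ℝ))
    have pr0 : 0 ≤ η₀ * (εf0 ^ 2 * ((xbar t : (Fin n ⊕ Fin m) → ℝ) ⬝ᵥ xbar t)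
        - (ΔA (ι t) *ᵥ (xbar t : (Fin n ⊕ Fin m) → ℝ)) ⬝ᵥ (ΔA (ι t) *ᵥ xbar t)) :=
      mul_nonneg hη₀.le (sub_nonneg.mpr nw₁)
    -- normalize everything and finish
    rw [← hSu] at lmi
    have hWa := hW (ΔA (ι t) *ᵥ (xbar t : (Fin n ⊕ Fin m) → ℝ))
      (ΔA (ι t) *ᵥ (xbar t : (Fin n ⊕ Fin m) → ℝ))
    simp only [Matrix.add_mulVec, Matrix.sub_mulVec, Matrix.smul_mulVec,
      Matrix.one_mulVec, Matrix.mulVec_add, Matrix.mulVec_sub, Matrix.mulVec_neg,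
      Matrix.neg_mulVec, Matrix.mulVec_zero, add_zero, dotProduct_add, dotProduct_sub,
      dotProduct_neg, neg_dotProduct, dotProduct_smul, smul_eq_mul, toPi,
      ← Matrix.mulVec_mulVec] at lmi nS hΛhalf pr0 hWa ⊢
    linarith [lmi, nS, hΛhalf, pr0, hWa]
  · -- region i ≠ 0
    obtain ⟨hη1, hη2, hη3⟩ := hη (ι t) hj
    -- instantiate the LMI of region i
    have lmi := hLMIi (ι t) hj (xbar t) (ΔA (ι t) *ᵥ xbar t) (ΔC (ι t)) 1
      (-((Su⁻¹ * Sx) *ᵥ (ΔA (ι t) *ᵥ xbar t + toPi (ΔC (ι t)))))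
      (fun h => hxne' h.1)
    -- norm bounds
    have nw₁ : (ΔA (ι t) *ᵥ (xbar t : (Fin n ⊕ Fin m) → ℝ)) ⬝ᵥ (ΔA (ι t) *ᵥ xbar t)
        ≤ εf ^ 2 * ((xbar t : (Fin n ⊕ Fin m) → ℝ) ⬝ᵥ xbar t) := by
      have h := hΔAi (ι t) hj (xbar t)
      have h2 := pow_le_pow_left₀ (norm_nonneg _) h 2
      calc (ΔA (ι t) *ᵥ (xbar t : (Fin n ⊕ Fin m) → ℝ)) ⬝ᵥ (ΔA (ι t) *ᵥ xbar t)
          = ‖(ΔA (ι t)).mulVecE (xbar t)‖ ^ 2 := dotProduct_self_eq_norm_sq ((ΔA (ι t)).mulVecE (xbar t))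
        _ ≤ (εf * ‖xbar t‖) ^ 2 := h2
        _ = εf ^ 2 * ((xbar t : (Fin n ⊕ Fin m) → ℝ) ⬝ᵥ xbar t) := by
            rw [mul_pow, dotProduct_self_eq_norm_sq]
    have nw₂ : (toPi (ΔC (ι t))) ⬝ᵥ toPi (ΔC (ι t)) ≤ εg ^ 2 := by
      have h := hΔCi (ι t) hj
      have h2 := pow_le_pow_left₀ (norm_nonneg _) h 2
      calc (toPi (ΔC (ι t))) ⬝ᵥ toPi (ΔC (ι t))
          = ‖ΔC (ι t)‖ ^ 2 := dotProduct_self_eq_norm_sq _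
        _ ≤ εg ^ 2 := h2
    -- region constraint
    have nQ : (xbar t : (Fin n ⊕ Fin m) → ℝ) ⬝ᵥ (Q (ι t))ᵀ *ᵥ (Q (ι t) *ᵥ xbar t)
        + 2 * ((xbar t : (Fin n ⊕ Fin m) → ℝ) ⬝ᵥ (Q (ι t))ᵀ *ᵥ (f (ι t)))
        + toPi (f (ι t)) ⬝ᵥ (f (ι t)) ≤ 1 := by
      have h := hreg t ht hj
      have h2 := pow_le_pow_left₀ (norm_nonneg _) h 2
      rw [one_pow] at h2
      have h3 : (Q (ι t) *ᵥ (xbar t : (Fin n ⊕ Fin m) → ℝ) + toPi (f (ι t))) ⬝ᵥ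
          (Q (ι t) *ᵥ (xbar t : (Fin n ⊕ Fin m) → ℝ) + toPi (f (ι t))) ≤ 1 := by
        show ((Q (ι t)).mulVecE (xbar t) + f (ι t) : Fin (k (ι t)) → ℝ) ⬝ᵥ
          ((Q (ι t)).mulVecE (xbar t) + f (ι t)) ≤ 1
        rw [dotProduct_self_eq_norm_sq]; exact h2
      rw [dotProduct_add, add_dotProduct, add_dotProduct,
        dotProduct_comm (toPi (f (ι t))) (Q (ι t) *ᵥ (xbar t))] at h3
      rw [dot_tmul, dot_tmul]
      simp only [toPi] at h3 ⊢
      linarith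
    -- Schur-type inequality for w₁ + w₂
    have nS : (((Su⁻¹ * Sx) *ᵥ (ΔA (ι t) *ᵥ (xbar t : (Fin n ⊕ Fin m) → ℝ)
            + toPi (ΔC (ι t)))) ⬝ᵥ Su *ᵥ
          ((Su⁻¹ * Sx) *ᵥ (ΔA (ι t) *ᵥ (xbar t : (Fin n ⊕ Fin m) → ℝ)
            + toPi (ΔC (ι t)))))
        ≤ 2 * ((R1 n m *ᵥ (ΔA (ι t) *ᵥ (xbar t : (Fin n ⊕ Fin m) → ℝ))) ⬝ᵥ P *ᵥ
            (R1 n m *ᵥ (ΔA (ι t) *ᵥ xbar t)))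
          + 2 * ((R1 n m *ᵥ toPi (ΔC (ι t))) ⬝ᵥ P *ᵥ
            (R1 n m *ᵥ toPi (ΔC (ι t)))) := by
      have hs := hschur (ΔA (ι t) *ᵥ (xbar t : (Fin n ⊕ Fin m) → ℝ)
        + toPi (ΔC (ι t)))
      have hp : 0 ≤ (R1 n m *ᵥ (ΔA (ι t) *ᵥ (xbar t : (Fin n ⊕ Fin m) → ℝ)
          - toPi (ΔC (ι t)))) ⬝ᵥ P *ᵥ
          (R1 n m *ᵥ (ΔA (ι t) *ᵥ (xbar t : (Fin n ⊕ Fin m) → ℝ)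
          - toPi (ΔC (ι t)))) := hPq _
      have hsym := dot_symm P hPt (R1 n m *ᵥ toPi (ΔC (ι t)))
        (R1 n m *ᵥ (ΔA (ι t) *ᵥ (xbar t : (Fin n ⊕ Fin m) → ℝ)))
      simp only [Matrix.mulVec_add, Matrix.mulVec_sub, dotProduct_add, dotProduct_sub,
        add_dotProduct, sub_dotProduct] at hs hp ⊢
      linarith
    -- nonnegative products
    have pr1 : 0 ≤ η₁ (ι t) * (εf ^ 2 * ((xbar t : (Fin n ⊕ Fin m) → ℝ) ⬝ᵥ xbar t)
        - (ΔA (ι t) *ᵥ (xbar t : (Fin n ⊕ Fin m) → ℝ)) ⬝ᵥ (ΔA (ι t) *ᵥ xbar t)) :=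
      mul_nonneg hη1.le (sub_nonneg.mpr nw₁)
    have pr2 : 0 ≤ η₂ (ι t) * (εg ^ 2
        - (toPi (ΔC (ι t))) ⬝ᵥ toPi (ΔC (ι t))) :=
      mul_nonneg hη2.le (sub_nonneg.mpr nw₂)
    have pr3 : 0 ≤ η₃ (ι t) * (1
        - ((xbar t : (Fin n ⊕ Fin m) → ℝ) ⬝ᵥ (Q (ι t))ᵀ *ᵥ (Q (ι t) *ᵥ xbar t)
          + 2 * ((xbar t : (Fin n ⊕ Fin m) → ℝ) ⬝ᵥ (Q (ι t))ᵀ *ᵥ (f (ι t)))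
          + toPi (f (ι t)) ⬝ᵥ (f (ι t)))) :=
      mul_nonneg hη3.le (sub_nonneg.mpr nQ)
    -- normalize everything and finish
    rw [← hSu] at lmi
    have hWa := hW (ΔA (ι t) *ᵥ (xbar t : (Fin n ⊕ Fin m) → ℝ))
      (ΔA (ι t) *ᵥ (xbar t : (Fin n ⊕ Fin m) → ℝ))
    have hWb := hW (toPi (ΔC (ι t))) (toPi (ΔC (ι t)))
    simp only [Matrix.add_mulVec, Matrix.sub_mulVec, Matrix.smul_mulVec,
      Matrix.one_mulVec, Matrix.mulVec_add, Matrix.mulVec_sub, Matrix.mulVec_neg,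
      Matrix.neg_mulVec, dotProduct_add, dotProduct_sub, dotProduct_neg, neg_dotProduct,
      dotProduct_smul, smul_eq_mul, one_pow, mul_one, toPi,
      ← Matrix.mulVec_mulVec] at lmi nS hΛhalf pr1 pr2 pr3 hWa hWb ⊢
    linarith [lmi, nS, hΛhalf, pr1, pr2, pr3, hWa, hWb]
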